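/- For λ ≥ 4, with θ = arccosh((λ-2)/2), the tridiagonal matrix Q_k(λ) is invertible, and when λ > 4 its inverse R has entries R_{ij} = (-1)^{i+j} [cosh((k+1-|i-j|)θ) - cosh((k+1-i-j)θ)] / [2 sinh θ · sinh((k+1)θ)] for 1 ≤ i,j ≤ k. -/

import Mathlib

open Real Matrix

/-- `Q_k(λ)`: `k×k` symmetric tridiagonal matrix with diagonal `λ-2` and off-diagonal `1`. -/
def Qmat (k : ℕ) (lam : ℝ) : Matrix (Fin k) (Fin k) ℝ :=
  fun i j => if i = j then lam - 2
    else if i.val + 1 = j.val ∨ j.val + 1 = i.val then 1 else 0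

/-- Inverse hyperbolic cosine (for `x ≥ 1`). -/
noncomputable def arcosh (x : ℝ) : ℝ := Real.log (x + Real.sqrt (x ^ 2 - 1))

lemma cosh_arcosh' {x : ℝ} (hx : 1 ≤ x) : Real.cosh (_root_.arcosh x) = x := by
  have h1 : (0:ℝ) ≤ x ^ 2 - 1 := by nlinarith
  have hs : Real.sqrt (x ^ 2 - 1) ^ 2 = x ^ 2 - 1 := Real.sq_sqrt h1
  have hy : 0 < x + Real.sqrt (x ^ 2 - 1) := by
    have := Real.sqrt_nonneg (x ^ 2 - 1); linarith
  have hinv : (x + Real.sqrt (x ^ 2 - 1))⁻¹ = x - Real.sqrt (x ^ 2 - 1) := by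
    have hmul : (x + Real.sqrt (x ^ 2 - 1)) * (x - Real.sqrt (x ^ 2 - 1)) = 1 := by nlinarith
    exact inv_eq_of_mul_eq_one_right hmul
  rw [_root_.arcosh, Real.cosh_eq, Real.exp_log hy, Real.exp_neg, Real.exp_log hy, hinv]
  ring

lemma arcosh_pos' {x : ℝ} (hx : 1 < x) : 0 < _root_.arcosh x := by
  have h1 : (0:ℝ) ≤ x ^ 2 - 1 := by nlinarith
  have hy : 1 < x + Real.sqrt (x ^ 2 - 1) := by
    have := Real.sqrt_nonneg (x ^ 2 - 1); linarith
  exact Real.log_pos hy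

lemma key (k : ℕ) (hk : 3 ≤ k) (lam D : ℝ) (hD : D ≠ 0) (g : ℕ → ℕ → ℝ)
    (h0 : ∀ j, 1 ≤ j → j ≤ k → g 0 j = 0)
    (hK : ∀ j, 1 ≤ j → j ≤ k → g (k+1) j = 0)
    (hrec : ∀ i j, 1 ≤ i → i ≤ k → 1 ≤ j → j ≤ k → i ≠ j →
      (lam - 2) * g i j = g (i-1) j + g (i+1) j)
    (hdiag : ∀ i, 1 ≤ i → i ≤ k →
      (lam - 2) * g i i - g (i-1) i - g (i+1) i = D)
    (R : Matrix (Fin k) (Fin k) ℝ)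
    (hR : ∀ i j : Fin k, R i j = (-1:ℝ)^(i.val + j.val) * g (i.val+1) (j.val+1) / D) :
    Qmat k lam * R = 1 := by
  ext i j
  obtain ⟨n, hnk⟩ := i
  obtain ⟨m, hmk⟩ := j
  rw [Matrix.mul_apply, Matrix.one_apply]
  have step : ∀ l : Fin k, Qmat k lam ⟨n, hnk⟩ l * R l ⟨m, hmk⟩ =
      (fun p : ℕ =>
        (if p = n then (lam - 2) * ((-1:ℝ) ^ (n + m) * g (n + 1) (m + 1) / D) else 0) +
        (if p = n + 1 then (-1:ℝ) ^ (n + 1 + m) * g (n + 2) (m + 1) / D else 0) +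
        (if p + 1 = n then (-1:ℝ) ^ (n - 1 + m) * g n (m + 1) / D else 0)) l.val := by
    intro l
    obtain ⟨p, hpk⟩ := l
    rw [hR]
    simp only [Qmat, Fin.mk.injEq]
    by_cases e1 : p = n
    · subst e1
      rw [if_pos rfl, if_pos rfl, if_neg (by omega), if_neg (by omega)]
      ring
    · by_cases e2 : p = n + 1
      · subst e2
        rw [if_neg (by omega), if_pos (Or.inl rfl), if_neg (by omega), if_pos rfl,
          if_neg (by omega), show n + 1 + 1 = n + 2 from by omega]
        ring
      · by_cases e3 : p + 1 = n
        · subst e3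
          rw [if_neg (by omega), if_pos (Or.inr rfl), if_neg (by omega), if_neg (by omega),
            if_pos rfl, show p + 1 - 1 + m = p + m from by omega]
          ring
        · rw [if_neg (by omega), if_neg (by omega), if_neg (by omega), if_neg (by omega),
            if_neg (by omega)]
          ring
  have hsum : (∑ l : Fin k, Qmat k lam ⟨n, hnk⟩ l * R l ⟨m, hmk⟩) =
      ∑ p ∈ Finset.range k,
        ((if p = n then (lam - 2) * ((-1:ℝ) ^ (n + m) * g (n + 1) (m + 1) / D) else 0) +
         (if p = n + 1 then (-1:ℝ) ^ (n + 1 + m) * g (n + 2) (m + 1) / D else 0) +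
         (if p + 1 = n then (-1:ℝ) ^ (n - 1 + m) * g n (m + 1) / D else 0)) :=
    (Finset.sum_congr rfl fun l _ => step l).trans
      (Fin.sum_univ_eq_sum_range (fun p =>
        (if p = n then (lam - 2) * ((-1:ℝ) ^ (n + m) * g (n + 1) (m + 1) / D) else 0) +
        (if p = n + 1 then (-1:ℝ) ^ (n + 1 + m) * g (n + 2) (m + 1) / D else 0) +
        (if p + 1 = n then (-1:ℝ) ^ (n - 1 + m) * g n (m + 1) / D else 0)) k)
  rw [hsum, Finset.sum_add_distrib, Finset.sum_add_distrib]
  have hs1 : ∑ p ∈ Finset.range k,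
      (if p = n then (lam - 2) * ((-1:ℝ) ^ (n + m) * g (n + 1) (m + 1) / D) else 0)
      = (lam - 2) * ((-1:ℝ) ^ (n + m) * g (n + 1) (m + 1) / D) := by
    rw [Finset.sum_ite_eq' (Finset.range k) n, if_pos (Finset.mem_range.mpr hnk)]
  have hs2 : ∑ p ∈ Finset.range k,
      (if p = n + 1 then (-1:ℝ) ^ (n + 1 + m) * g (n + 2) (m + 1) / D else 0)
      = -((-1:ℝ) ^ (n + m) * g (n + 2) (m + 1)) / D := by
    rw [Finset.sum_ite_eq' (Finset.range k) (n+1)]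
    by_cases h : n + 1 < k
    · rw [if_pos (Finset.mem_range.mpr h), show n + 1 + m = (n + m) + 1 from by omega,
        pow_succ]
      ring
    · rw [if_neg (by simp; omega), show n + 2 = k + 1 from by omega,
        hK (m+1) (by omega) (by omega)]
      ring
  have hs3 : ∑ p ∈ Finset.range k,
      (if p + 1 = n then (-1:ℝ) ^ (n - 1 + m) * g n (m + 1) / D else 0)
      = -((-1:ℝ) ^ (n + m) * g n (m + 1)) / D := by
    rcases Nat.eq_zero_or_pos n with h | h
    · subst h
      rw [Finset.sum_eq_zero (fun p _ => by rw [if_neg (by omega)]),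
        h0 (m+1) (by omega) (by omega)]
      ring
    · rw [Finset.sum_eq_single_of_mem (n-1) (Finset.mem_range.mpr (by omega))
        (fun p _ hp => by rw [if_neg (by omega)]), if_pos (by omega),
        show n + m = (n - 1 + m) + 1 from by omega, pow_succ]
      ring
  rw [hs1, hs2, hs3]
  have hbracket : (lam - 2) * ((-1:ℝ) ^ (n + m) * g (n + 1) (m + 1) / D) +
      -((-1:ℝ) ^ (n + m) * g (n + 2) (m + 1)) / D +
      -((-1:ℝ) ^ (n + m) * g n (m + 1)) / D =
      (-1:ℝ) ^ (n + m) * ((lam - 2) * g (n+1) (m+1) - g n (m+1) - g (n+2) (m+1)) / D := by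
    ring
  rw [hbracket]
  by_cases hij : n = m
  · subst hij
    rw [if_pos rfl]
    have hd := hdiag (n+1) (by omega) (by omega)
    rw [Nat.add_sub_cancel] at hd
    rw [show (lam - 2) * g (n+1) (n+1) - g n (n+1) - g (n+2) (n+1) = D from by linarith [hd]]
    rw [Even.neg_one_pow ⟨n, rfl⟩]
    field_simp
  · rw [if_neg (by simp only [Fin.mk.injEq]; exact hij)]
    have hr := hrec (n+1) (m+1) (by omega) (by omega) (by omega) (by omega) (by omega)
    rw [Nat.add_sub_cancel] at hr
    rw [show (lam - 2) * g (n+1) (m+1) - g n (m+1) - g (n+2) (m+1) = 0 from by linarith [hr]]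
    simp

/-- Right inverse in the hyperbolic case `λ > 4`. -/
lemma inv_hyp (k : ℕ) (hk : 3 ≤ k) (lam : ℝ) (h4 : 4 < lam)
    (θ : ℝ) (hθ : θ = _root_.arcosh ((lam - 2) / 2)) :
    Qmat k lam * (Matrix.of fun i j : Fin k =>
      (-1 : ℝ) ^ (i.val + j.val) *
        (Real.cosh (((k : ℝ) + 1 - |((i.val : ℝ) + 1) - ((j.val : ℝ) + 1)|) * θ) -
          Real.cosh (((k : ℝ) + 1 - ((i.val : ℝ) + 1) - ((j.val : ℝ) + 1)) * θ)) /
        (2 * Real.sinh θ * Real.sinh (((k:ℝ) + 1) * θ))) = 1 := by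
  have hx : (1:ℝ) < (lam - 2) / 2 := by linarith
  have hθpos : 0 < θ := hθ ▸ arcosh_pos' hx
  have hc : lam - 2 = 2 * Real.cosh θ := by
    rw [hθ, cosh_arcosh' hx.le]; ring
  have hsθ : 0 < Real.sinh θ := Real.sinh_pos_iff.mpr hθpos
  have hsK : 0 < Real.sinh (((k:ℝ) + 1) * θ) := by
    apply Real.sinh_pos_iff.mpr
    positivity
  have hD : 2 * Real.sinh θ * Real.sinh (((k:ℝ) + 1) * θ) ≠ 0 := by positivity
  set g : ℕ → ℕ → ℝ := fun a b =>
    Real.cosh (((k:ℝ)+1 - |(a:ℝ) - (b:ℝ)|) * θ) - Real.cosh (((k:ℝ)+1 - (a:ℝ) - (b:ℝ)) * θ)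
    with hg
  apply key k hk lam _ hD g
  · -- h0
    intro j h1j hjk
    simp only [hg]
    rw [Nat.cast_zero, zero_sub, abs_neg,
      abs_of_nonneg (by positivity : (0:ℝ) ≤ (j:ℝ)),
      show (k:ℝ)+1 - 0 - (j:ℝ) = (k:ℝ)+1 - (j:ℝ) from by ring, sub_self]
  · -- hK
    intro j h1j hjk
    have hjr : (j:ℝ) ≤ (k:ℝ) + 1 := by
      have : (j:ℝ) ≤ (k:ℝ) := by exact_mod_cast hjk
      linarith
    simp only [hg]
    rw [show ((k+1:ℕ):ℝ) = (k:ℝ)+1 from by push_cast; ring,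
      abs_of_nonneg (by linarith : (0:ℝ) ≤ (k:ℝ) + 1 - (j:ℝ)),
      show ((k:ℝ)+1 - ((k:ℝ)+1 - (j:ℝ))) * θ = (j:ℝ) * θ from by ring,
      show ((k:ℝ)+1 - ((k:ℝ)+1) - (j:ℝ)) * θ = -((j:ℝ) * θ) from by ring,
      Real.cosh_neg, sub_self]
  · -- hrec
    intro i j h1i hik h1j hjk hne
    have hcast : ((i-1:ℕ):ℝ) = (i:ℝ) - 1 := by push_cast [h1i]; ring
    simp only [hg]
    rw [hcast]
    push_cast
    rcases lt_or_gt_of_ne hne with h | h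
    · have hij : (i:ℝ) + 1 ≤ (j:ℝ) := by exact_mod_cast h
      have a1 : |(i:ℝ) - (j:ℝ)| = (j:ℝ) - i := by
        rw [abs_sub_comm]; exact abs_of_nonneg (by linarith)
      have a0 : |(i:ℝ) - 1 - (j:ℝ)| = (j:ℝ) - i + 1 := by
        rw [abs_of_nonpos (by linarith)]; ring
      have a2 : |(i:ℝ) + 1 - (j:ℝ)| = (j:ℝ) - i - 1 := by
        rw [abs_sub_comm, abs_of_nonneg (by linarith)]; ring
      rw [a0, a1, a2,
        show ((k:ℝ)+1 - ((j:ℝ) - i + 1)) * θ = ((k:ℝ)+1 - ((j:ℝ) - i)) * θ - θ from by ring,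
        show ((k:ℝ)+1 - ((j:ℝ) - i - 1)) * θ = ((k:ℝ)+1 - ((j:ℝ) - i)) * θ + θ from by ring,
        show ((k:ℝ)+1 - ((i:ℝ) - 1) - j) * θ = ((k:ℝ)+1 - (i:ℝ) - j) * θ + θ from by ring,
        show ((k:ℝ)+1 - ((i:ℝ) + 1) - j) * θ = ((k:ℝ)+1 - (i:ℝ) - j) * θ - θ from by ring,
        hc]
      simp only [Real.cosh_add, Real.cosh_sub]
      ring
    · have hij : (j:ℝ) + 1 ≤ (i:ℝ) := by exact_mod_cast h
      have a1 : |(i:ℝ) - (j:ℝ)| = (i:ℝ) - j := abs_of_nonneg (by linarith)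
      have a0 : |(i:ℝ) - 1 - (j:ℝ)| = (i:ℝ) - j - 1 := by
        rw [abs_of_nonneg (by linarith)]; ring
      have a2 : |(i:ℝ) + 1 - (j:ℝ)| = (i:ℝ) - j + 1 := by
        rw [abs_of_nonneg (by linarith)]; ring
      rw [a0, a1, a2,
        show ((k:ℝ)+1 - ((i:ℝ) - j - 1)) * θ = ((k:ℝ)+1 - ((i:ℝ) - j)) * θ + θ from by ring,
        show ((k:ℝ)+1 - ((i:ℝ) - j + 1)) * θ = ((k:ℝ)+1 - ((i:ℝ) - j)) * θ - θ from by ring,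
        show ((k:ℝ)+1 - ((i:ℝ) - 1) - j) * θ = ((k:ℝ)+1 - (i:ℝ) - j) * θ + θ from by ring,
        show ((k:ℝ)+1 - ((i:ℝ) + 1) - j) * θ = ((k:ℝ)+1 - (i:ℝ) - j) * θ - θ from by ring,
        hc]
      simp only [Real.cosh_add, Real.cosh_sub]
      ring
  · -- hdiag
    intro i h1i hik
    have hcast : ((i-1:ℕ):ℝ) = (i:ℝ) - 1 := by push_cast [h1i]; ring
    simp only [hg]
    rw [hcast]
    push_cast
    have a1 : |(i:ℝ) - (i:ℝ)| = 0 := by simp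
    have a0 : |(i:ℝ) - 1 - (i:ℝ)| = 1 := by
      rw [abs_of_nonpos (by linarith)]; ring
    have a2 : |(i:ℝ) + 1 - (i:ℝ)| = 1 := by
      rw [abs_of_nonneg (by linarith)]; ring
    rw [a0, a1, a2,
      show ((k:ℝ)+1 - (0:ℝ)) * θ = ((k:ℝ)+1) * θ from by ring,
      show ((k:ℝ)+1 - (1:ℝ)) * θ = ((k:ℝ)+1) * θ - θ from by ring,
      show ((k:ℝ)+1 - ((i:ℝ) - 1) - i) * θ = ((k:ℝ)+1 - (i:ℝ) - i) * θ + θ from by ring,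
      show ((k:ℝ)+1 - ((i:ℝ) + 1) - i) * θ = ((k:ℝ)+1 - (i:ℝ) - i) * θ - θ from by ring,
      hc]
    simp only [Real.cosh_add, Real.cosh_sub]
    ring
  · -- hR
    intro i j
    simp only [Matrix.of_apply, hg]
    push_cast
    ring_nf

/-- Right inverse in the case `λ = 4`. -/
lemma inv_four (k : ℕ) (hk : 3 ≤ k) :
    Qmat k 4 * (Matrix.of fun i j : Fin k =>
      (-1 : ℝ) ^ (i.val + j.val) *
        (((min (i.val+1) (j.val+1) : ℕ) : ℝ) * ((k:ℝ) + 1 - ((max (i.val+1) (j.val+1) : ℕ) : ℝ))) /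
        ((k:ℝ) + 1)) = 1 := by
  have hD : ((k:ℝ) + 1) ≠ 0 := by positivity
  set g : ℕ → ℕ → ℝ := fun a b => ((min a b : ℕ) : ℝ) * ((k:ℝ) + 1 - ((max a b : ℕ) : ℝ)) with hg
  apply key k hk 4 _ hD g
  · intro j h1j hjk
    have e : min 0 j = 0 := by omega
    simp [hg, e]
  · intro j h1j hjk
    have h1 : max (k+1) j = k + 1 := by omega
    simp only [hg, h1]
    push_cast
    ring
  · intro i j h1i hik h1j hjk hne
    rcases lt_or_gt_of_ne hne with h | h
    · have e1 : min i j = i := by omega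
      have e2 : max i j = j := by omega
      have e3 : min (i-1) j = i-1 := by omega
      have e4 : max (i-1) j = j := by omega
      have e5 : min (i+1) j = i+1 := by omega
      have e6 : max (i+1) j = j := by omega
      simp only [hg, e1, e2, e3, e4, e5, e6]
      have hcast : ((i-1:ℕ):ℝ) = (i:ℝ) - 1 := by push_cast [h1i]; ring
      rw [hcast]
      push_cast
      ring
    · have e1 : min i j = j := by omega
      have e2 : max i j = i := by omega
      have e3 : min (i-1) j = j := by omega
      have e4 : max (i-1) j = i-1 := by omega
      have e5 : min (i+1) j = j := by omega
      have e6 : max (i+1) j = i+1 := by omega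
      simp only [hg, e1, e2, e3, e4, e5, e6]
      have hcast : ((i-1:ℕ):ℝ) = (i:ℝ) - 1 := by push_cast [h1i]; ring
      rw [hcast]
      push_cast
      ring
  · intro i h1i hik
    have e1 : min i i = i := by omega
    have e2 : max i i = i := by omega
    have e3 : min (i-1) i = i-1 := by omega
    have e4 : max (i-1) i = i := by omega
    have e5 : min (i+1) i = i := by omega
    have e6 : max (i+1) i = i+1 := by omega
    simp only [hg, e1, e2, e3, e4, e5, e6]
    have hcast : ((i-1:ℕ):ℝ) = (i:ℝ) - 1 := by push_cast [h1i]; ring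
    rw [hcast]
    push_cast
    ring
  · intro i j
    simp only [Matrix.of_apply, hg]

theorem stmt7 (k : ℕ) (hk : 3 ≤ k) (lam : ℝ) (h4 : 4 ≤ lam)
    (θ : ℝ) (hθ : θ = _root_.arcosh ((lam - 2) / 2)) :
    IsUnit (Qmat k lam).det ∧
    (4 < lam → ∀ i j : Fin k,
      (Qmat k lam)⁻¹ i j =
        (-1 : ℝ) ^ (i.val + j.val) *
          (Real.cosh (((k : ℝ) + 1 - |((i.val : ℝ) + 1) - ((j.val : ℝ) + 1)|) * θ) -
            Real.cosh (((k : ℝ) + 1 - ((i.val : ℝ) + 1) - ((j.val : ℝ) + 1)) * θ)) /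
          (2 * Real.sinh θ * Real.sinh ((k + 1) * θ))) := by
  constructor
  · rcases eq_or_lt_of_le h4 with heq | hlt
    · subst heq
      exact Matrix.isUnit_det_of_right_inverse (inv_four k hk)
    · exact Matrix.isUnit_det_of_right_inverse (inv_hyp k hk lam hlt θ hθ)
  · intro hlt i j
    rw [Matrix.inv_eq_right_inv (inv_hyp k hk lam hlt θ hθ)]
    simp only [Matrix.of_apply]
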